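/- Let ε > 0, Δt > 0, σ_s ≥ 0, σ_a ≥ 0, h > 0, φ with 0 ≤ ε²φ ≤ 1, and d² ∈ [−4/h², 0] real. Define σ_t = σ_s + ε²σ_a and g = (1/2)(1/(ε² + σ_s Δt)) · (Δt² d² (1 − ε²φ) + (1 − σ_a Δt)(2ε² + σ_s Δt)). If Δt ≤ 1/σ_a (vacuously if σ_a = 0) and Δt ≤ max{εh/2, h²σ_t/4}, then 1 + 2g ≥ (1/(ε² + σ_s Δt)) · (ε² − 4Δt²/h² + σ_s Δt) ≥ 0. -/

import Mathlib

set_option maxHeartbeats 1000000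

/-- Lower bound on the half-trace:
`1 + 2g ≥ (1/(ε² + σ_s Δt))·(ε² − 4Δt²/h² + σ_s Δt) ≥ 0` under the CFL condition. -/
theorem stmt3 (ε Δt σs σa h φ dsq : ℝ)
    (hε : 0 < ε) (hΔt : 0 < Δt) (hσs : 0 ≤ σs) (hσa : 0 ≤ σa) (hh : 0 < h)
    (hφ0 : 0 ≤ ε ^ 2 * φ) (hφ1 : ε ^ 2 * φ ≤ 1)
    (hdsq1 : -(4 / h ^ 2) ≤ dsq) (hdsq2 : dsq ≤ 0)
    (σt g : ℝ) (hσt : σt = σs + ε ^ 2 * σa)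
    (hg : g = 1 / 2 * (1 / (ε ^ 2 + σs * Δt)) *
      (Δt ^ 2 * dsq * (1 - ε ^ 2 * φ) + (1 - σa * Δt) * (2 * ε ^ 2 + σs * Δt)))
    (hCFL1 : σa * Δt ≤ 1)
    (hCFL2 : Δt ≤ max (ε * h / 2) (h ^ 2 * σt / 4)) :
    1 / (ε ^ 2 + σs * Δt) * (ε ^ 2 - 4 * Δt ^ 2 / h ^ 2 + σs * Δt) ≤ 1 + 2 * g ∧
    0 ≤ 1 / (ε ^ 2 + σs * Δt) * (ε ^ 2 - 4 * Δt ^ 2 / h ^ 2 + σs * Δt) := by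
  have hD : 0 < ε ^ 2 + σs * Δt := by positivity
  have hh2 : 0 < h ^ 2 := by positivity
  have hnum : 0 ≤ ε ^ 2 - 4 * Δt ^ 2 / h ^ 2 + σs * Δt := by
    rcases le_max_iff.mp hCFL2 with hc | hc
    · have h1 : 4 * Δt ^ 2 / h ^ 2 ≤ ε ^ 2 := by
        rw [div_le_iff₀ hh2]; nlinarith
      nlinarith
    · have h1 : 4 * Δt ^ 2 / h ^ 2 ≤ Δt * σt := by
        rw [div_le_iff₀ hh2]; nlinarith
      nlinarith
  constructor
  · rw [hg]
    have hform : 1 + 2 * (1 / 2 * (1 / (ε ^ 2 + σs * Δt)) *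
        (Δt ^ 2 * dsq * (1 - ε ^ 2 * φ) + (1 - σa * Δt) * (2 * ε ^ 2 + σs * Δt))) =
        ((ε ^ 2 + σs * Δt) + (Δt ^ 2 * dsq * (1 - ε ^ 2 * φ) +
          (1 - σa * Δt) * (2 * ε ^ 2 + σs * Δt))) / (ε ^ 2 + σs * Δt) := by
      field_simp
    rw [hform, one_div, inv_mul_eq_div, div_le_div_iff_of_pos_right hD]
    have hkey2 : 0 ≤ (1 - σa * Δt) * (2 * ε ^ 2 + σs * Δt) := by nlinarith
    have h5 : dsq ≤ dsq * (1 - ε ^ 2 * φ) := by nlinarith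
    have h6 : Δt ^ 2 * dsq ≤ Δt ^ 2 * (dsq * (1 - ε ^ 2 * φ)) :=
      mul_le_mul_of_nonneg_left h5 (sq_nonneg Δt)
    have h7 : -(4 / h ^ 2) * Δt ^ 2 ≤ Δt ^ 2 * dsq := by nlinarith [sq_nonneg Δt]
    have hexp : -(4 / h ^ 2) * Δt ^ 2 = -(4 * Δt ^ 2 / h ^ 2) := by ring
    nlinarith [h6, h7, hkey2]
  · positivity
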